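/- There is a universal constant C > 0 such that for every integer n ≥ 1: 𝔼_ε sup{ |(1/n²) Σ_{i,j=1}^n ε_{ij} x_i y_j| : x, y ∈ ℂ^n with |x_i| ≤ 1 and |y_j| ≤ 1 for all i, j } ≤ C·n^{-1/2}. Equivalently, 𝔼_ε ‖(1/n²) Σ_{i,j} ε_{ij} e_i ⊗ e_j‖_{ℓ1^n ⊗_ε ℓ1^n} ≤ C·n^{-1/2}. -/

import Mathlib

open scoped BigOperators

noncomputable section

def sgn (b : Bool) : ℂ := if b then 1 else -1

/-- Uniform average of a real-valued function over a finite type. -/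
def Eavg {α : Type} [Fintype α] (f : α → ℝ) : ℝ := (∑ x, f x) / (Fintype.card α : ℝ)

/-- The norm of `t` in `ℓ1^n ⊗_ε ℓ1^n`. -/
def l1epsNorm {n : ℕ} (t : Matrix (Fin n) (Fin n) ℂ) : ℝ :=
  sSup {s : ℝ | ∃ x y : Fin n → ℂ,
    (∀ i, ‖x i‖ ≤ 1) ∧ (∀ j, ‖y j‖ ≤ 1) ∧
    s = ‖∑ i, ∑ j, t i j * x i * y j‖}

namespace St16

/-- real sign -/
def r (b : Bool) : ℝ := if b then 1 else -1

lemma sgn_eq (b : Bool) : sgn b = (r b : ℂ) := by cases b <;> simp [sgn, r]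

lemma abs_eq_r (c : ℝ) : |c| = r (decide (0 ≤ c)) * c := by
  by_cases h : 0 ≤ c
  · simp [r, h, abs_of_nonneg h]
  · simp [r, h, abs_of_neg (lt_of_not_ge h)]

variable {n : ℕ}

/-- bilinear sign sum -/
def S (ε : Fin n × Fin n → Bool) (u v : Fin n → Bool) : ℝ :=
  ∑ i, ∑ j, r (ε (i, j)) * r (u i) * r (v j)

/-- max over sign vectors -/
def G (ε : Fin n × Fin n → Bool) : ℝ :=
  Finset.univ.sup' Finset.univ_nonempty
    (fun p : (Fin n → Bool) × (Fin n → Bool) => |S ε p.1 p.2|)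

lemma absS_le_G (ε : Fin n × Fin n → Bool) (u v : Fin n → Bool) :
    |S ε u v| ≤ G ε :=
  Finset.le_sup' (fun p : (Fin n → Bool) × (Fin n → Bool) => |S ε p.1 p.2|)
    (Finset.mem_univ (u, v))

lemma G_nonneg (ε : Fin n × Fin n → Bool) : 0 ≤ G ε :=
  le_trans (abs_nonneg _) (absS_le_G ε (fun _ => true) (fun _ => true))

lemma bil_le (ε : Fin n × Fin n → Bool) (p q : Fin n → ℝ)
    (hp : ∀ i, |p i| ≤ 1) (hq : ∀ j, |q j| ≤ 1) :
    |∑ i, ∑ j, r (ε (i, j)) * p i * q j| ≤ G ε := by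
  set c : Fin n → ℝ := fun i => ∑ j, r (ε (i, j)) * q j with hc
  have h1 : ∑ i, ∑ j, r (ε (i, j)) * p i * q j = ∑ i, p i * c i := by
    refine Finset.sum_congr rfl fun i _ => ?_
    rw [hc, Finset.mul_sum]
    exact Finset.sum_congr rfl fun j _ => by ring
  have h2 : |∑ i, p i * c i| ≤ ∑ i, |c i| := by
    refine (Finset.abs_sum_le_sum_abs _ _).trans (Finset.sum_le_sum fun i _ => ?_)
    rw [abs_mul]
    exact mul_le_of_le_one_left (abs_nonneg _) (hp i)
  set u : Fin n → Bool := fun i => decide (0 ≤ c i) with hu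
  have h3 : ∑ i, |c i| = ∑ i, r (u i) * c i :=
    Finset.sum_congr rfl fun i _ => abs_eq_r (c i)
  set d : Fin n → ℝ := fun j => ∑ i, r (ε (i, j)) * r (u i) with hd
  have h4 : ∑ i, r (u i) * c i = ∑ j, d j * q j := by
    have : ∑ i, r (u i) * c i = ∑ i, ∑ j, r (ε (i, j)) * r (u i) * q j := by
      refine Finset.sum_congr rfl fun i _ => ?_
      rw [hc, Finset.mul_sum]
      exact Finset.sum_congr rfl fun j _ => by ring
    rw [this, Finset.sum_comm]
    refine Finset.sum_congr rfl fun j _ => ?_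
    rw [hd, Finset.sum_mul]
  have h5 : ∑ j, d j * q j ≤ ∑ j, |d j| := by
    refine le_trans (le_abs_self _) ((Finset.abs_sum_le_sum_abs _ _).trans
      (Finset.sum_le_sum fun j _ => ?_))
    rw [abs_mul]
    exact mul_le_of_le_one_right (abs_nonneg _) (hq j)
  set v : Fin n → Bool := fun j => decide (0 ≤ d j) with hv
  have h6 : ∑ j, |d j| = ∑ j, r (v j) * d j :=
    Finset.sum_congr rfl fun j _ => abs_eq_r (d j)
  have h7 : ∑ j, r (v j) * d j = S ε u v := by
    unfold S
    rw [Finset.sum_comm]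
    refine Finset.sum_congr rfl fun j _ => ?_
    rw [hd, Finset.mul_sum]
    exact Finset.sum_congr rfl fun i _ => by ring
  have h8 : S ε u v ≤ G ε := le_trans (le_abs_self _) (absS_le_G ε u v)
  calc |∑ i, ∑ j, r (ε (i, j)) * p i * q j| = |∑ i, p i * c i| := by rw [h1]
    _ ≤ ∑ i, |c i| := h2
    _ = ∑ i, r (u i) * c i := h3
    _ = ∑ j, d j * q j := h4
    _ ≤ ∑ j, |d j| := h5
    _ = ∑ j, r (v j) * d j := h6
    _ = S ε u v := h7
    _ ≤ G ε := h8

lemma complex_le (ε : Fin n × Fin n → Bool) (x y : Fin n → ℂ)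
    (hx : ∀ i, ‖x i‖ ≤ 1) (hy : ∀ j, ‖y j‖ ≤ 1) :
    ‖∑ i, ∑ j, sgn (ε (i, j)) * x i * y j‖ ≤ 4 * G ε := by
  set Z : ℂ := ∑ i, ∑ j, sgn (ε (i, j)) * x i * y j with hZ
  have hre : ∀ (b : Bool) (w z : ℂ),
      (sgn b * w * z).re = r b * (w.re * z.re) - r b * (w.im * z.im) := by
    intro b w z
    rw [sgn_eq]
    simp [Complex.mul_re, Complex.mul_im]
    ring
  have him : ∀ (b : Bool) (w z : ℂ),
      (sgn b * w * z).im = r b * (w.re * z.im) + r b * (w.im * z.re) := by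
    intro b w z
    rw [sgn_eq]
    simp [Complex.mul_re, Complex.mul_im]
    ring
  have hZre : Z.re = (∑ i, ∑ j, r (ε (i, j)) * (x i).re * (y j).re)
      - ∑ i, ∑ j, r (ε (i, j)) * (x i).im * (y j).im := by
    rw [hZ, Complex.re_sum, ← Finset.sum_sub_distrib]
    refine Finset.sum_congr rfl fun i _ => ?_
    rw [Complex.re_sum, ← Finset.sum_sub_distrib]
    refine Finset.sum_congr rfl fun j _ => ?_
    rw [hre]
    ring
  have hZim : Z.im = (∑ i, ∑ j, r (ε (i, j)) * (x i).re * (y j).im)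
      + ∑ i, ∑ j, r (ε (i, j)) * (x i).im * (y j).re := by
    rw [hZ, Complex.im_sum, ← Finset.sum_add_distrib]
    refine Finset.sum_congr rfl fun i _ => ?_
    rw [Complex.im_sum, ← Finset.sum_add_distrib]
    refine Finset.sum_congr rfl fun j _ => ?_
    rw [him]
    ring
  have hxre : ∀ i, |(x i).re| ≤ 1 := fun i => (Complex.abs_re_le_norm _).trans (hx i)
  have hxim : ∀ i, |(x i).im| ≤ 1 := fun i => (Complex.abs_im_le_norm _).trans (hx i)
  have hyre : ∀ j, |(y j).re| ≤ 1 := fun j => (Complex.abs_re_le_norm _).trans (hy j)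
  have hyim : ∀ j, |(y j).im| ≤ 1 := fun j => (Complex.abs_im_le_norm _).trans (hy j)
  have b1 := bil_le ε (fun i => (x i).re) (fun j => (y j).re) hxre hyre
  have b2 := bil_le ε (fun i => (x i).im) (fun j => (y j).im) hxim hyim
  have b3 := bil_le ε (fun i => (x i).re) (fun j => (y j).im) hxre hyim
  have b4 := bil_le ε (fun i => (x i).im) (fun j => (y j).re) hxim hyre
  calc ‖Z‖ ≤ |Z.re| + |Z.im| := Complex.norm_le_abs_re_add_abs_im Z
    _ ≤ (|∑ i, ∑ j, r (ε (i, j)) * (x i).re * (y j).re|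
          + |∑ i, ∑ j, r (ε (i, j)) * (x i).im * (y j).im|)
        + (|∑ i, ∑ j, r (ε (i, j)) * (x i).re * (y j).im|
          + |∑ i, ∑ j, r (ε (i, j)) * (x i).im * (y j).re|) := by
        rw [hZre, hZim]
        exact add_le_add (abs_sub _ _) (abs_add_le _ _)
    _ ≤ (G ε + G ε) + (G ε + G ε) := by
        exact add_le_add (add_le_add b1 b2) (add_le_add b3 b4)
    _ = 4 * G ε := by ring

lemma l1_le (ε : Fin n × Fin n → Bool) :
    l1epsNorm (Matrix.of fun i j => ((n : ℂ) ^ 2)⁻¹ * sgn (ε (i, j)))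
      ≤ ((n : ℝ) ^ 2)⁻¹ * (4 * G ε) := by
  refine Real.sSup_le ?_ ?_
  · rintro s ⟨x, y, hx, hy, rfl⟩
    have hfac : (∑ i, ∑ j, (Matrix.of fun i j => ((n : ℂ) ^ 2)⁻¹ * sgn (ε (i, j))) i j
        * x i * y j) = ((n : ℂ) ^ 2)⁻¹ * ∑ i, ∑ j, sgn (ε (i, j)) * x i * y j := by
      rw [Finset.mul_sum]
      refine Finset.sum_congr rfl fun i _ => ?_
      rw [Finset.mul_sum]
      refine Finset.sum_congr rfl fun j _ => ?_
      simp [Matrix.of_apply]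
      ring
    rw [hfac, norm_mul, norm_inv, norm_pow, Complex.norm_natCast]
    exact mul_le_mul_of_nonneg_left (complex_le ε x y hx hy) (by positivity)
  · have := G_nonneg ε
    positivity

lemma mgf (u v : Fin n → Bool) (t : ℝ) :
    (∑ ε : Fin n × Fin n → Bool, Real.exp (t * S ε u v))
      = (Real.exp t + Real.exp (-t)) ^ (n * n) := by
  have hS : ∀ ε : Fin n × Fin n → Bool,
      S ε u v = ∑ m : Fin n × Fin n, r (ε m) * r (u m.1) * r (v m.2) := by
    intro ε
    rw [S, Fintype.sum_prod_type]
  have hfac : ∀ ε : Fin n × Fin n → Bool,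
      Real.exp (t * S ε u v) = ∏ m : Fin n × Fin n,
        Real.exp (t * (r (ε m) * r (u m.1) * r (v m.2))) := by
    intro ε
    rw [hS, Finset.mul_sum, Real.exp_sum]
  calc (∑ ε : Fin n × Fin n → Bool, Real.exp (t * S ε u v))
      = ∑ ε : Fin n × Fin n → Bool, ∏ m : Fin n × Fin n,
          Real.exp (t * (r (ε m) * r (u m.1) * r (v m.2))) :=
        Finset.sum_congr rfl fun ε _ => hfac ε
    _ = ∏ m : Fin n × Fin n, ∑ b : Bool,
          Real.exp (t * (r b * r (u m.1) * r (v m.2))) := by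
        rw [← Fintype.piFinset_univ,
          ← Finset.prod_univ_sum (fun _ : Fin n × Fin n => (Finset.univ : Finset Bool))
            (fun m b => Real.exp (t * (r b * r (u m.1) * r (v m.2))))]
    _ = ∏ _m : Fin n × Fin n, (Real.exp t + Real.exp (-t)) := by
        refine Finset.prod_congr rfl fun m _ => ?_
        cases hb1 : u m.1 <;> cases hb2 : v m.2 <;>
          simp [r, Fintype.sum_bool] <;> ring_nf <;>
          first | rfl | exact add_comm _ _
    _ = (Real.exp t + Real.exp (-t)) ^ (n * n) := by
        rw [Finset.prod_const, Finset.card_univ, Fintype.card_prod, Fintype.card_fin]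

lemma cosh_le {t : ℝ} (ht : |t| ≤ 1) :
    (Real.exp t + Real.exp (-t)) / 2 ≤ Real.exp (t ^ 2) := by
  have key : ∀ s : ℝ, |s| ≤ 1 → Real.exp s ≤ 1 + s + s ^ 2 := by
    intro s hs
    have h := Real.exp_bound hs (by norm_num : (0:ℕ) < 2)
    have hsum : ∑ m ∈ Finset.range 2, s ^ m / (Nat.factorial m) = 1 + s := by
      simp [Finset.sum_range_succ]
    rw [hsum] at h
    norm_num [Nat.factorial] at h
    have h2 : Real.exp s - (1 + s) ≤ s ^ 2 * (3 / 4) := le_trans (le_abs_self _) h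
    nlinarith [sq_nonneg s]
  have h1 := key t ht
  have h2 := key (-t) (by rwa [abs_neg])
  have h3 : (1 : ℝ) + t ^ 2 ≤ Real.exp (t ^ 2) := by
    have := Real.add_one_le_exp (t ^ 2)
    linarith
  nlinarith [sq_nonneg t]

lemma jensen {α : Type} [Fintype α] [Nonempty α] (f : α → ℝ) :
    Real.exp (Eavg f) ≤ Eavg (fun a => Real.exp (f a)) := by
  have hM : (0 : ℝ) < (Fintype.card α : ℝ) := by
    exact_mod_cast Fintype.card_pos
  have h1 : Real.exp (Eavg f) = ∏ a : α, Real.exp (f a) ^ ((Fintype.card α : ℝ)⁻¹) := by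
    rw [Eavg, div_eq_mul_inv, Finset.sum_mul, Real.exp_sum]
    exact Finset.prod_congr rfl fun a _ => Real.exp_mul (f a) _
  rw [h1]
  have := Real.geom_mean_le_arith_mean_weighted Finset.univ
    (fun _ : α => (Fintype.card α : ℝ)⁻¹) (fun a => Real.exp (f a))
    (fun _ _ => by positivity)
    (by rw [Finset.sum_const, Finset.card_univ, nsmul_eq_mul, mul_inv_cancel₀ hM.ne'])
    (fun a _ => (Real.exp_pos _).le)
  refine this.trans_eq ?_
  rw [Eavg, div_eq_mul_inv, Finset.sum_mul]
  exact Finset.sum_congr rfl fun a _ => mul_comm _ _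


lemma Eavg_mono {α : Type} [Fintype α] (f g : α → ℝ) (h : ∀ a, f a ≤ g a) :
    Eavg f ≤ Eavg g := by
  unfold Eavg
  rw [div_eq_mul_inv, div_eq_mul_inv]
  exact mul_le_mul_of_nonneg_right (Finset.sum_le_sum fun a _ => h a) (by positivity)

lemma Eavg_const_mul {α : Type} [Fintype α] (c : ℝ) (f : α → ℝ) :
    Eavg (fun a => c * f a) = c * Eavg f := by
  rw [Eavg, Eavg, ← Finset.mul_sum, mul_div_assoc]

lemma card_eps : Fintype.card (Fin n × Fin n → Bool) = 2 ^ (n * n) := by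
  rw [Fintype.card_fun, Fintype.card_bool, Fintype.card_prod, Fintype.card_fin]

lemma Eavg_mgf_le (hn : 1 ≤ n) (u v : Fin n → Bool) {t : ℝ} (ht : |t| ≤ 1) :
    Eavg (fun ε : Fin n × Fin n → Bool => Real.exp (t * S ε u v)) ≤ Real.exp (t ^ 2) ^ (n * n) := by
  rw [Eavg, mgf u v t, card_eps]
  push_cast
  rw [← div_pow]
  exact pow_le_pow_left₀ (by positivity) (cosh_le ht) _

lemma Eavg_G_le (hn : 1 ≤ n) : Eavg (G (n := n)) ≤ 4 * n * Real.sqrt n := by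
  have hn0 : (0 : ℝ) < n := by exact_mod_cast hn
  have hs1 : 1 ≤ Real.sqrt n := by
    rw [show (1:ℝ) = Real.sqrt 1 by simp]
    exact Real.sqrt_le_sqrt (by exact_mod_cast hn)
  have hs0 : 0 < Real.sqrt n := lt_of_lt_of_le one_pos hs1
  set l : ℝ := (Real.sqrt n)⁻¹ with hl
  have hl0 : 0 < l := inv_pos.mpr hs0
  have hl1 : |l| ≤ 1 := by
    rw [abs_of_pos hl0]
    exact inv_le_one_of_one_le₀ hs1
  have hlsq : l ^ 2 = (n : ℝ)⁻¹ := by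
    rw [hl, ← Real.sqrt_inv, Real.sq_sqrt (by positivity)]
  -- Jensen
  have heq : l * Eavg (G (n := n)) = Eavg (fun ε : Fin n × Fin n → Bool => l * G ε) := by
    rw [Eavg_const_mul]
  have jen : Real.exp (l * Eavg (G (n := n)))
      ≤ Eavg (fun ε : Fin n × Fin n → Bool => Real.exp (l * G ε)) := by
    rw [heq]
    exact jensen _
  -- pointwise bound by sum over all sign pairs
  have point : ∀ ε : Fin n × Fin n → Bool, Real.exp (l * G ε)
      ≤ ∑ p : (Fin n → Bool) × (Fin n → Bool),
          (Real.exp (l * S ε p.1 p.2) + Real.exp (-l * S ε p.1 p.2)) := by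
    intro ε
    obtain ⟨p, -, hp⟩ := Finset.exists_mem_eq_sup'
      (Finset.univ_nonempty : (Finset.univ :
        Finset ((Fin n → Bool) × (Fin n → Bool))).Nonempty)
      (fun p : (Fin n → Bool) × (Fin n → Bool) => |S ε p.1 p.2|)
    have h1 : Real.exp (l * G ε)
        ≤ Real.exp (l * S ε p.1 p.2) + Real.exp (-l * S ε p.1 p.2) := by
      rw [G, hp]
      rcases abs_choice (S ε p.1 p.2) with h | h
      · rw [h]
        exact le_add_of_nonneg_right (Real.exp_pos _).le
      · rw [h, show l * -S ε p.1 p.2 = -l * S ε p.1 p.2 by ring]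
        exact le_add_of_nonneg_left (Real.exp_pos _).le
    refine h1.trans (Finset.single_le_sum (f := fun q : (Fin n → Bool) × (Fin n → Bool) =>
      Real.exp (l * S ε q.1 q.2) + Real.exp (-l * S ε q.1 q.2))
      (fun q _ => by positivity) (Finset.mem_univ p))
  have step2 : Eavg (fun ε : Fin n × Fin n → Bool => Real.exp (l * G ε))
      ≤ ∑ p : (Fin n → Bool) × (Fin n → Bool),
          (Eavg (fun ε : Fin n × Fin n → Bool => Real.exp (l * S ε p.1 p.2))
           + Eavg (fun ε : Fin n × Fin n → Bool => Real.exp (-l * S ε p.1 p.2))) := by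
    refine (Eavg_mono _ _ point).trans_eq ?_
    rw [Eavg]
    rw [Finset.sum_comm]
    rw [Finset.sum_div]
    refine Finset.sum_congr rfl fun p _ => ?_
    rw [Eavg, Eavg, Finset.sum_add_distrib, add_div]
  have mgfb : ∀ p : (Fin n → Bool) × (Fin n → Bool),
      Eavg (fun ε : Fin n × Fin n → Bool => Real.exp (l * S ε p.1 p.2))
        + Eavg (fun ε : Fin n × Fin n → Bool => Real.exp (-l * S ε p.1 p.2))
      ≤ 2 * Real.exp n := by
    intro p
    have e1 := Eavg_mgf_le hn p.1 p.2 hl1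
    have e2 := Eavg_mgf_le hn p.1 p.2 (t := -l) (by rwa [abs_neg])
    have hpow : Real.exp (l ^ 2) ^ (n * n) = Real.exp n := by
      rw [← Real.exp_nat_mul, hlsq]
      congr 1
      push_cast
      field_simp
    rw [hpow] at e1
    rw [neg_sq, hpow] at e2
    linarith
  have card_p : (Fintype.card ((Fin n → Bool) × (Fin n → Bool)) : ℝ) = 2 ^ n * 2 ^ n := by
    rw [Fintype.card_prod, Fintype.card_fun, Fintype.card_bool, Fintype.card_fin]
    push_cast
    ring
  have total : Eavg (fun ε : Fin n × Fin n → Bool => Real.exp (l * G ε))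
      ≤ (2 ^ n * 2 ^ n) * (2 * Real.exp n) := by
    refine step2.trans ?_
    calc (∑ p : (Fin n → Bool) × (Fin n → Bool),
          (Eavg (fun ε : Fin n × Fin n → Bool => Real.exp (l * S ε p.1 p.2))
           + Eavg (fun ε : Fin n × Fin n → Bool => Real.exp (-l * S ε p.1 p.2))))
        ≤ ∑ _p : (Fin n → Bool) × (Fin n → Bool), 2 * Real.exp n :=
          Finset.sum_le_sum fun p _ => mgfb p
      _ = (2 ^ n * 2 ^ n) * (2 * Real.exp n) := by
          rw [Finset.sum_const, Finset.card_univ, nsmul_eq_mul, card_p]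
  have h2exp : (2 : ℝ) ^ n ≤ Real.exp n := by
    have h2 : (2 : ℝ) ≤ Real.exp 1 := by
      have := Real.add_one_le_exp 1
      linarith
    calc (2 : ℝ) ^ n ≤ Real.exp 1 ^ n := pow_le_pow_left₀ (by norm_num) h2 n
      _ = Real.exp n := by rw [← Real.exp_nat_mul, mul_one]
  have h2e : (2 : ℝ) ≤ Real.exp n := by
    have h2 : (2 : ℝ) ≤ Real.exp 1 := by
      have := Real.add_one_le_exp 1
      linarith
    exact h2.trans (Real.exp_le_exp.mpr (by exact_mod_cast hn))
  have bound : ((2 : ℝ) ^ n * 2 ^ n) * (2 * Real.exp n) ≤ Real.exp (4 * n) := by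
    have e4 : Real.exp (4 * (n : ℝ))
        = Real.exp n * Real.exp n * (Real.exp n * Real.exp n) := by
      push_cast
      rw [show (4:ℝ) * (n:ℝ) = (n:ℝ) + n + ((n:ℝ) + n) by ring,
        Real.exp_add, Real.exp_add]
    rw [e4]
    have hen : (0:ℝ) < Real.exp n := Real.exp_pos _
    have h1 : (0:ℝ) ≤ (2:ℝ)^n := by positivity
    have a1 : (2:ℝ)^n * 2^n ≤ Real.exp n * Real.exp n :=
      mul_le_mul h2exp h2exp h1 hen.le
    have a2 : 2 * Real.exp n ≤ Real.exp n * Real.exp n :=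
      mul_le_mul_of_nonneg_right h2e hen.le
    exact mul_le_mul a1 a2 (by positivity) (by positivity)
  have key : l * Eavg (G (n := n)) ≤ 4 * n :=
    Real.exp_le_exp.mp (jen.trans (total.trans bound))
  have hEG : Eavg (G (n := n)) = Real.sqrt n * (l * Eavg (G (n := n))) := by
    rw [hl]
    field_simp
  calc Eavg (G (n := n)) = Real.sqrt n * (l * Eavg (G (n := n))) := hEG
    _ ≤ Real.sqrt n * (4 * n) := mul_le_mul_of_nonneg_left key hs0.le
    _ = 4 * n * Real.sqrt n := by ring

end St16

/-- there is a universal constant `C > 0` such that for every `n ≥ 1`,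
`𝔼_ε ‖(1/n²) Σ_{ij} e_{ij} e_i ⊗ e_j‖_{ℓ1^n ⊗_ε ℓ1^n} ≤ C·n^{-1/2}`. -/
theorem statement16 :
    ∃ C : ℝ, 0 < C ∧
      ∀ n : ℕ, 1 ≤ n →
        Eavg (fun ε : Fin n × Fin n → Bool =>
          l1epsNorm (Matrix.of fun i j => ((n : ℂ) ^ 2)⁻¹ * sgn (ε (i, j))))
          ≤ C / Real.sqrt n := by
  refine ⟨16, by norm_num, fun n hn => ?_⟩
  have hn0 : (0:ℝ) < n := by exact_mod_cast hn
  have hs0 : 0 < Real.sqrt n := Real.sqrt_pos.mpr hn0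
  have step1 : Eavg (fun ε : Fin n × Fin n → Bool =>
      l1epsNorm (Matrix.of fun i j => ((n : ℂ) ^ 2)⁻¹ * sgn (ε (i, j))))
      ≤ Eavg (fun ε : Fin n × Fin n → Bool => ((n : ℝ) ^ 2)⁻¹ * (4 * St16.G ε)) :=
    St16.Eavg_mono _ _ (fun ε => St16.l1_le ε)
  have step2 : Eavg (fun ε : Fin n × Fin n → Bool => ((n : ℝ) ^ 2)⁻¹ * (4 * St16.G ε))
      = ((n : ℝ) ^ 2)⁻¹ * (4 * Eavg (St16.G (n := n))) := by
    rw [St16.Eavg_const_mul]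
    congr 1
    exact St16.Eavg_const_mul 4 _
  have step3 := St16.Eavg_G_le hn
  have hmm : Real.sqrt n * Real.sqrt n = n := Real.mul_self_sqrt hn0.le
  have step4 : ((n : ℝ) ^ 2)⁻¹ * (4 * (4 * n * Real.sqrt n)) = 16 / Real.sqrt n := by
    field_simp
    nlinarith [hmm, hn0, hs0]
  calc Eavg (fun ε : Fin n × Fin n → Bool =>
      l1epsNorm (Matrix.of fun i j => ((n : ℂ) ^ 2)⁻¹ * sgn (ε (i, j))))
      ≤ ((n : ℝ) ^ 2)⁻¹ * (4 * Eavg (St16.G (n := n))) := step1.trans_eq step2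
    _ ≤ ((n : ℝ) ^ 2)⁻¹ * (4 * (4 * n * Real.sqrt n)) := by
        exact mul_le_mul_of_nonneg_left
          (mul_le_mul_of_nonneg_left step3 (by norm_num)) (by positivity)
    _ = 16 / Real.sqrt n := step4

end
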